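/- Let N_G(x) = Σ_{T ∈ G} 𝟙_{J_T}(x) be the counting function of a finite family G of intervals {J_T} from a fixed grid D, and suppose: (i) the maximal intervals J ∈ J⁰ of the family satisfy Σ_{J ∈ J⁰} |J| ≤ C₁ 2^{3k}, and (ii) for every interval J, Σ_{T ∈ G : J_T ⊂ J} |J_T| ≤ C₂ 2^{3k} |J| (a Carleson/BMO packing condition). Then G admits a decomposition G = G' ∪ G'' such that ‖N_{G'}‖_∞ ≲ 2^{4k} and ‖N_{G''}‖₁ ≲ 2^{−100k}. -/

import Mathlib

open MeasureTheory Finset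
open scoped Classical ENNReal

lemma chain_min' {ι : Type} (S : ι → Set ℝ) (T : Finset ι) (hT : T.Nonempty)
    (hc : ∀ i ∈ T, ∀ j ∈ T, S i ⊆ S j ∨ S j ⊆ S i) :
    ∃ i₀ ∈ T, ∀ i ∈ T, S i₀ ⊆ S i := by
  classical
  induction T using Finset.induction with
  | empty => exact absurd hT (by simp)
  | @insert a s ha ih =>
    by_cases hs : s.Nonempty
    · obtain ⟨i₀, hi₀, hmin⟩ := ih hs
        (fun i hi j hj => hc i (mem_insert_of_mem hi) j (mem_insert_of_mem hj))
      rcases hc a (mem_insert_self _ _) i₀ (mem_insert_of_mem hi₀) with h | h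
      · refine ⟨a, mem_insert_self _ _, fun i hi => ?_⟩
        rcases mem_insert.1 hi with rfl | hi
        · exact subset_rfl
        · exact h.trans (hmin i hi)
      · refine ⟨i₀, mem_insert_of_mem hi₀, fun i hi => ?_⟩
        rcases mem_insert.1 hi with rfl | hi
        · exact h
        · exact hmin i hi
    · rw [Finset.not_nonempty_iff_eq_empty] at hs
      subst hs
      exact ⟨a, mem_insert_self _ _, fun i hi => by
        rcases mem_insert.1 hi with rfl | hi
        · exact subset_rfl
        · simp at hi⟩

lemma chain_max' {ι : Type} (S : ι → Set ℝ) (T : Finset ι) (hT : T.Nonempty)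
    (hc : ∀ i ∈ T, ∀ j ∈ T, S i ⊆ S j ∨ S j ⊆ S i) :
    ∃ i₀ ∈ T, ∀ i ∈ T, S i ⊆ S i₀ := by
  classical
  induction T using Finset.induction with
  | empty => exact absurd hT (by simp)
  | @insert a s ha ih =>
    by_cases hs : s.Nonempty
    · obtain ⟨i₀, hi₀, hmax⟩ := ih hs
        (fun i hi j hj => hc i (mem_insert_of_mem hi) j (mem_insert_of_mem hj))
      rcases hc a (mem_insert_self _ _) i₀ (mem_insert_of_mem hi₀) with h | h
      · refine ⟨i₀, mem_insert_of_mem hi₀, fun i hi => ?_⟩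
        rcases mem_insert.1 hi with rfl | hi
        · exact h
        · exact hmax i hi
      · refine ⟨a, mem_insert_self _ _, fun i hi => ?_⟩
        rcases mem_insert.1 hi with rfl | hi
        · exact subset_rfl
        · exact (hmax i hi).trans h
    · rw [Finset.not_nonempty_iff_eq_empty] at hs
      subst hs
      exact ⟨a, mem_insert_self _ _, fun i hi => by
        rcases mem_insert.1 hi with rfl | hi
        · exact subset_rfl
        · simp at hi⟩

theorem stmt8 (C₁ C₂ : ℝ) (hC₁ : 0 < C₁) (hC₂ : 0 < C₂) :
    ∃ C₃ > 0, ∀ (k : ℕ), 1 ≤ k → ∀ (ι : Type) (G : Finset ι) (J : ι → Set ℝ),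
      (∀ i ∈ G, ∃ x y : ℝ, x < y ∧ J i = Set.Ico x y) →
      (∀ i ∈ G, ∀ i' ∈ G, J i ⊆ J i' ∨ J i' ⊆ J i ∨ Disjoint (J i) (J i')) →
      (volume (⋃ i ∈ G, J i)).toReal ≤ C₁ * 2 ^ (3 * k) →
      (∀ x y : ℝ, x < y →
        (∑ i ∈ G.filter (fun i => J i ⊆ Set.Ico x y), (volume (J i)).toReal) ≤
          C₂ * 2 ^ (3 * k) * (y - x)) →
      ∃ G' G'' : Finset ι, G' ∪ G'' = G ∧ Disjoint G' G'' ∧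
        (∀ x : ℝ, (∑ i ∈ G', Set.indicator (J i) (fun _ => (1:ℝ)) x) ≤
          C₃ * 2 ^ (4 * k)) ∧
        (∑ i ∈ G'', (volume (J i)).toReal) ≤ C₃ * ((2:ℝ) ^ (100 * k))⁻¹ := by
  classical
  refine ⟨C₁ * C₂ + 220 * C₂ + 111, by positivity, ?_⟩
  intro k hk ι G J hIco hnest hunion hpack
  -- basic facts about the intervals
  have hJne : ∀ i ∈ G, (J i).Nonempty := by
    intro i hi
    obtain ⟨x, y, hxy, hJ⟩ := hIco i hi
    rw [hJ]
    exact Set.nonempty_Ico.2 hxy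
  have hJmeas : ∀ i ∈ G, MeasurableSet (J i) := by
    intro i hi
    obtain ⟨x, y, _, hJ⟩ := hIco i hi
    rw [hJ]; exact measurableSet_Ico
  have hJfin : ∀ i ∈ G, volume (J i) ≠ ⊤ := by
    intro i hi
    obtain ⟨x, y, _, hJ⟩ := hIco i hi
    rw [hJ, Real.volume_Ico]; exact ENNReal.ofReal_ne_top
  set Q : ℝ := C₂ * 2 ^ (3 * k) with hQdef
  have hQ : 0 < Q := by positivity
  set D : ℕ := ⌈2 * Q⌉₊ with hDdef
  have hD1 : 1 ≤ D := Nat.one_le_iff_ne_zero.2 (by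
    simp only [hDdef, ne_eq, Nat.ceil_eq_zero, not_le]
    positivity)
  have hDQ : 2 * Q ≤ (D : ℝ) := Nat.le_ceil _
  have hDle : (D : ℝ) ≤ 2 * Q + 1 := (Nat.ceil_lt_add_one (by positivity)).le
  set depth : ι → ℕ := fun i => (G.filter (fun i' => J i ⊆ J i')).card with hdepth
  set F : ℕ → Finset ι := fun m => G.filter (fun i => m ≤ depth i) with hFdef
  set U : ℕ → Set ℝ := fun m => ⋃ i ∈ F m, J i with hUdef
  have hFsub : ∀ m, F m ⊆ G := fun m => filter_subset _ _
  have hUmeas : ∀ m, MeasurableSet (U m) := fun m =>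
    (F m).measurableSet_biUnion (fun i hi => hJmeas i (hFsub m hi))
  have hsumfin : ∀ s : Finset ι, s ⊆ G → (∑ i ∈ s, volume (J i)) ≠ ⊤ := by
    intro s hs
    exact (ENNReal.sum_lt_top.2 fun i hi => lt_top_iff_ne_top.2 (hJfin i (hs hi))).ne
  have hUfin : ∀ m, volume (U m) ≠ ⊤ := by
    intro m
    exact ne_top_of_le_ne_top (hsumfin (F m) (hFsub m)) (measure_biUnion_finset_le _ _)
  -- counting function as a cardinality
  have hsumcard : ∀ (s : Finset ι) (x : ℝ),
      (∑ i ∈ s, (J i).indicator (fun _ => (1:ℝ≥0∞)) x)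
        = ((s.filter (fun i => x ∈ J i)).card : ℝ≥0∞) := by
    intro s x
    rw [← Finset.sum_boole]
    exact Finset.sum_congr rfl fun i _ => by simp [Set.indicator_apply]
  -- chain bound: a family of intervals all containing x has cardinality ≤ min depth
  have hcount_le : ∀ (x : ℝ) (s : Finset ι), s ⊆ G → (∀ i ∈ s, x ∈ J i) →
      s.Nonempty → ∃ i₀ ∈ s, s.card ≤ depth i₀ := by
    intro x s hsG hx hne
    have hc : ∀ i ∈ s, ∀ j ∈ s, J i ⊆ J j ∨ J j ⊆ J i := by
      intro i hi j hj
      rcases hnest i (hsG hi) j (hsG hj) with h | h | h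
      · exact Or.inl h
      · exact Or.inr h
      · exact absurd (hx j hj) (Set.disjoint_left.1 h (hx i hi)).elim
    obtain ⟨i₀, hi₀, hmin⟩ := chain_min' J s hne hc
    refine ⟨i₀, hi₀, ?_⟩
    exact Finset.card_le_card fun i hi => mem_filter.2 ⟨hsG hi, hmin i hi⟩
  have hdepth1 : ∀ i ∈ G, 1 ≤ depth i := by
    intro i hi
    exact Finset.card_pos.2 ⟨i, mem_filter.2 ⟨hi, subset_rfl⟩⟩
  have hF1 : F 1 = G := by
    ext i
    simp only [hFdef, mem_filter, and_iff_left_iff_imp]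
    exact fun hi => hdepth1 i hi
  -- pointwise counting lower bound on U (m + D)
  have hpoint : ∀ (m : ℕ) (x : ℝ), x ∈ U (m + D) →
      (D : ℕ) ≤ ((F m).filter (fun i => x ∈ J i)).card := by
    intro m x hx
    rw [hUdef] at hx
    simp only [Set.mem_iUnion, exists_prop] at hx
    obtain ⟨i, hiF, hxi⟩ := hx
    have hiG : i ∈ G := hFsub _ hiF
    have hidep : m + D ≤ depth i := (mem_filter.1 hiF).2
    set Sup : Finset ι := G.filter (fun i' => J i ⊆ J i') with hSup
    have hSupcard : m + D ≤ Sup.card := hidep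
    have hxSup : ∀ i' ∈ Sup, x ∈ J i' := fun i' h => (mem_filter.1 h).2 hxi
    set B : Finset ι := Sup.filter (fun i' => depth i' < m) with hB
    have hBs : B ⊆ Sup := filter_subset _ _
    have hBcard : B.card ≤ m := by
      by_cases hBne : B.Nonempty
      · obtain ⟨i₀, hi₀, hle⟩ := hcount_le x B ((hBs.trans (filter_subset _ _)))
          (fun i' h => hxSup i' (hBs h)) hBne
        have : depth i₀ < m := (mem_filter.1 hi₀).2
        omega
      · rw [Finset.not_nonempty_iff_eq_empty] at hBne
        rw [hBne]
        simp
    have hsub : Sup \ B ⊆ (F m).filter (fun i' => x ∈ J i') := by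
      intro i' hi'
      rw [mem_sdiff] at hi'
      obtain ⟨hi'S, hi'B⟩ := hi'
      have hnm : ¬ depth i' < m := fun h => hi'B (mem_filter.2 ⟨hi'S, h⟩)
      exact mem_filter.2 ⟨mem_filter.2 ⟨(mem_filter.1 hi'S).1, by omega⟩, hxSup i' hi'S⟩
    have hcard : (Sup \ B).card = Sup.card - B.card := Finset.card_sdiff_of_subset hBs
    have := Finset.card_le_card hsub
    omega
  -- key inequality 1 : D * |U (m+D)| ≤ ∑_{F m} |J i|
  have key1 : ∀ m : ℕ, (D : ℝ) * (volume (U (m + D))).toReal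
      ≤ ∑ i ∈ F m, (volume (J i)).toReal := by
    intro m
    have h1 : (D : ℝ≥0∞) * volume (U (m + D))
        = ∫⁻ x, (U (m + D)).indicator (fun _ => (D : ℝ≥0∞)) x := by
      rw [lintegral_indicator (hUmeas _), setLIntegral_const]
    have h3 : ∫⁻ x, ∑ i ∈ F m, (J i).indicator (fun _ => (1:ℝ≥0∞)) x
        = ∑ i ∈ F m, volume (J i) := by
      rw [lintegral_finset_sum _
        (fun i hi => measurable_const.indicator (hJmeas i (hFsub _ hi)))]
      refine Finset.sum_congr rfl fun i hi => ?_
      rw [lintegral_indicator (hJmeas i (hFsub _ hi)), setLIntegral_const, one_mul]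
    have hE : (D : ℝ≥0∞) * volume (U (m + D)) ≤ ∑ i ∈ F m, volume (J i) := by
      rw [h1, ← h3]
      refine lintegral_mono fun x => ?_
      by_cases hx : x ∈ U (m + D)
      · rw [Set.indicator_of_mem hx, hsumcard]
        exact (Nat.cast_le (α := ℝ≥0∞)).2 (hpoint m x hx)
      · simp [Set.indicator_of_notMem hx]
    have := ENNReal.toReal_mono (hsumfin _ (hFsub m)) hE
    rwa [ENNReal.toReal_mul, ENNReal.toReal_natCast D,
      ENNReal.toReal_sum (fun i hi => hJfin i (hFsub m hi))] at this
  -- key inequality 2 : ∑_{F m} |J i| ≤ Q * |U m|  (Carleson packing)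
  have key2 : ∀ m : ℕ, (∑ i ∈ F m, (volume (J i)).toReal)
      ≤ Q * (volume (U m)).toReal := by
    intro m
    set Sets : Finset (Set ℝ) := (F m).image J with hSets
    set Max : Finset (Set ℝ) := Sets.filter (fun K => ∀ K' ∈ Sets, ¬ K ⊂ K') with hMax
    have hMaxSets : Max ⊆ Sets := filter_subset _ _
    have hSetsEl : ∀ K ∈ Sets, ∃ i ∈ F m, J i = K := by
      intro K hK; simpa using Finset.mem_image.1 hK
    have hSnest : ∀ K ∈ Sets, ∀ K' ∈ Sets, K ⊆ K' ∨ K' ⊆ K ∨ Disjoint K K' := by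
      intro K hK K' hK'
      obtain ⟨i, hi, rfl⟩ := hSetsEl K hK
      obtain ⟨i', hi', rfl⟩ := hSetsEl K' hK'
      exact hnest i (hFsub m hi) i' (hFsub m hi')
    have hSetsNe : ∀ K ∈ Sets, K.Nonempty := by
      intro K hK; obtain ⟨i, hi, rfl⟩ := hSetsEl K hK; exact hJne i (hFsub m hi)
    -- every interval of F m lies in a maximal one
    have claim1 : ∀ i ∈ F m, ∃ K ∈ Max, J i ⊆ K := by
      intro i hi
      set Sup : Finset (Set ℝ) := Sets.filter (fun K => J i ⊆ K) with hSupS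
      have hne : Sup.Nonempty :=
        ⟨J i, mem_filter.2 ⟨Finset.mem_image_of_mem J hi, subset_rfl⟩⟩
      have hc : ∀ K ∈ Sup, ∀ K' ∈ Sup, id K ⊆ id K' ∨ id K' ⊆ id K := by
        intro K hK K' hK'
        have hKi : J i ⊆ K := (mem_filter.1 hK).2
        have hK'i : J i ⊆ K' := (mem_filter.1 hK').2
        rcases hSnest K (filter_subset _ _ hK) K' (filter_subset _ _ hK') with h | h | h
        · exact Or.inl h
        · exact Or.inr h
        · obtain ⟨z, hz⟩ := hJne i (hFsub m hi)
          exact absurd (hK'i hz) (Set.disjoint_left.1 h (hKi hz)).elim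
      obtain ⟨K, hK, hmax⟩ := chain_max' id Sup hne hc
      refine ⟨K, mem_filter.2 ⟨filter_subset _ _ hK, ?_⟩, (mem_filter.1 hK).2⟩
      intro K'' hK'' hss
      have : K'' ∈ Sup := mem_filter.2 ⟨hK'', (mem_filter.1 hK).2.trans hss.subset⟩
      exact hss.not_subset (hmax K'' this)
    have hMaxdisj : (Max : Set (Set ℝ)).PairwiseDisjoint id := by
      intro K hK K' hK' hne'
      simp only [Finset.mem_coe, hMax, Finset.mem_filter] at hK hK'
      rcases hSnest K hK.1 K' hK'.1 with h | h | h
      · exact absurd (HasSubset.Subset.ssubset_of_ne h hne') (hK.2 K' hK'.1)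
      · exact absurd (HasSubset.Subset.ssubset_of_ne h (Ne.symm hne')) (hK'.2 K hK.1)
      · exact h
    have hMaxIco : ∀ K ∈ Max, ∃ x y : ℝ, x < y ∧ K = Set.Ico x y := by
      intro K hK
      obtain ⟨i, hi, rfl⟩ := hSetsEl K (hMaxSets hK)
      exact hIco i (hFsub m hi)
    have hMaxmeas : ∀ K ∈ Max, MeasurableSet K := by
      intro K hK
      obtain ⟨x, y, _, rfl⟩ := hMaxIco K hK
      exact measurableSet_Ico
    have hMaxfin : ∀ K ∈ Max, volume K ≠ ⊤ := by
      intro K hK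
      obtain ⟨x, y, _, rfl⟩ := hMaxIco K hK
      rw [Real.volume_Ico]; exact ENNReal.ofReal_ne_top
    -- splitting the sum
    have hsubB : F m ⊆ Max.biUnion (fun K => G.filter (fun i => J i ⊆ K)) := by
      intro i hi
      obtain ⟨K, hK, hiK⟩ := claim1 i hi
      exact Finset.mem_biUnion.2 ⟨K, hK, mem_filter.2 ⟨hFsub m hi, hiK⟩⟩
    have hdisjB : ∀ K ∈ Max, ∀ K' ∈ Max, K ≠ K' →
        Disjoint (G.filter (fun i => J i ⊆ K)) (G.filter (fun i => J i ⊆ K')) := by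
      intro K hK K' hK' hne'
      rw [Finset.disjoint_left]
      intro i hiK hiK'
      obtain ⟨z, hz⟩ := hJne i (mem_filter.1 hiK).1
      exact (Set.disjoint_left.1 (hMaxdisj hK hK' hne')
        ((mem_filter.1 hiK).2 hz)) ((mem_filter.1 hiK').2 hz)
    have hsplit : (∑ i ∈ F m, (volume (J i)).toReal)
        ≤ ∑ K ∈ Max, ∑ i ∈ G.filter (fun i => J i ⊆ K), (volume (J i)).toReal := by
      rw [← Finset.sum_biUnion hdisjB]
      exact Finset.sum_le_sum_of_subset_of_nonneg hsubB
        (fun _ _ _ => ENNReal.toReal_nonneg)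
    have hinner : ∀ K ∈ Max, (∑ i ∈ G.filter (fun i => J i ⊆ K), (volume (J i)).toReal)
        ≤ Q * (volume K).toReal := by
      intro K hK
      obtain ⟨x, y, hxy, rfl⟩ := hMaxIco K hK
      have := hpack x y hxy
      rwa [Real.volume_Ico, ENNReal.toReal_ofReal (by linarith)]
    have hbe : volume (⋃ K ∈ Max, (K : Set ℝ)) = ∑ K ∈ Max, volume K :=
      measure_biUnion_finset hMaxdisj hMaxmeas
    have hsub2 : (⋃ K ∈ Max, (K : Set ℝ)) ⊆ U m := by
      intro z hz
      simp only [Set.mem_iUnion, exists_prop] at hz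
      obtain ⟨K, hK, hzK⟩ := hz
      obtain ⟨i, hi, rfl⟩ := hSetsEl K (hMaxSets hK)
      show z ∈ ⋃ i ∈ F m, J i
      exact Set.mem_biUnion hi hzK
    have hMaxvol : (∑ K ∈ Max, (volume K).toReal) ≤ (volume (U m)).toReal := by
      rw [← ENNReal.toReal_sum (fun K hK => hMaxfin K hK), ← hbe]
      exact ENNReal.toReal_mono (hUfin m) (measure_mono hsub2)
    calc (∑ i ∈ F m, (volume (J i)).toReal)
        ≤ ∑ K ∈ Max, ∑ i ∈ G.filter (fun i => J i ⊆ K), (volume (J i)).toReal := hsplit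
      _ ≤ ∑ K ∈ Max, Q * (volume K).toReal := Finset.sum_le_sum hinner
      _ = Q * ∑ K ∈ Max, (volume K).toReal := by rw [Finset.mul_sum]
      _ ≤ Q * (volume (U m)).toReal :=
          mul_le_mul_of_nonneg_left hMaxvol hQ.le
  -- halving step
  have hstep : ∀ m : ℕ, (volume (U (m + D))).toReal ≤ (1/2) * (volume (U m)).toReal := by
    intro m
    have h1 := key1 m
    have h2 := key2 m
    have hDpos : (0:ℝ) < D := by exact_mod_cast hD1
    have ha : (0:ℝ) ≤ (volume (U m)).toReal := ENNReal.toReal_nonneg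
    nlinarith [ENNReal.toReal_nonneg (a := volume (U (m + D)))]
  have hiter : ∀ n : ℕ, (volume (U (1 + n * D))).toReal
      ≤ (1/2 : ℝ)^n * (volume (U 1)).toReal := by
    intro n
    induction n with
    | zero => simp
    | succ n ih =>
      have heq : 1 + (n + 1) * D = (1 + n * D) + D := by ring
      rw [heq]
      calc (volume (U ((1 + n * D) + D))).toReal
          ≤ (1/2) * (volume (U (1 + n * D))).toReal := hstep _
        _ ≤ (1/2) * ((1/2 : ℝ)^n * (volume (U 1)).toReal) := by linarith
        _ = (1/2 : ℝ)^(n+1) * (volume (U 1)).toReal := by ring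
  have hU1 : (volume (U 1)).toReal ≤ C₁ * 2 ^ (3 * k) := by
    rw [hUdef]
    simp only [hF1]
    exact hunion
  -- the decomposition
  set M : ℕ := 1 + (110 * k) * D with hM
  refine ⟨G.filter (fun i => depth i ≤ M), G.filter (fun i => ¬ depth i ≤ M),
    Finset.filter_union_filter_not_eq _ _, Finset.disjoint_filter_filter_not _ _ _,
    ?_, ?_⟩
  · -- L∞ bound
    intro x
    have hcard : (∑ i ∈ G.filter (fun i => depth i ≤ M),
        Set.indicator (J i) (fun _ => (1:ℝ)) x)
        = (((G.filter (fun i => depth i ≤ M)).filter (fun i => x ∈ J i)).card : ℝ) := by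
      rw [← Finset.sum_boole]
      exact Finset.sum_congr rfl fun i _ => by simp [Set.indicator_apply]
    rw [hcard]
    have hcardM : ((G.filter (fun i => depth i ≤ M)).filter (fun i => x ∈ J i)).card ≤ M := by
      set T := (G.filter (fun i => depth i ≤ M)).filter (fun i => x ∈ J i) with hT
      by_cases hTne : T.Nonempty
      · obtain ⟨i₀, hi₀, hle⟩ := hcount_le x T
          ((filter_subset _ _).trans (filter_subset _ _))
          (fun i hi => (mem_filter.1 hi).2) hTne
        have : depth i₀ ≤ M := (mem_filter.1 ((filter_subset _ _) hi₀ : i₀ ∈ _)).2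
        omega
      · rw [Finset.not_nonempty_iff_eq_empty] at hTne
        simp [hTne]
    have hMle : (M : ℝ) ≤ (C₁ * C₂ + 220 * C₂ + 111) * 2 ^ (4 * k) := by
      have hk2 : (k : ℝ) ≤ 2 ^ k := by exact_mod_cast (Nat.lt_two_pow_self (n := k)).le
      have hpw : (2:ℝ) ^ k * 2 ^ (3 * k) = 2 ^ (4 * k) := by
        rw [← pow_add]; ring_nf
      have e1 : (k : ℝ) * 2 ^ (3 * k) ≤ 2 ^ (4 * k) := by
        calc (k : ℝ) * 2 ^ (3 * k) ≤ 2 ^ k * 2 ^ (3 * k) :=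
              mul_le_mul_of_nonneg_right hk2 (by positivity)
          _ = 2 ^ (4 * k) := hpw
      have e2 : (k : ℝ) ≤ 2 ^ (4 * k) := hk2.trans (pow_le_pow_right₀ one_le_two (by omega))
      have e3 : (1 : ℝ) ≤ 2 ^ (4 * k) := one_le_pow₀ one_le_two
      have e4 : (k : ℝ) * (D : ℝ) ≤ (k : ℝ) * (2 * Q + 1) :=
        mul_le_mul_of_nonneg_left hDle (Nat.cast_nonneg k)
      have e1' : C₂ * ((k : ℝ) * 2 ^ (3 * k)) ≤ C₂ * 2 ^ (4 * k) :=
        mul_le_mul_of_nonneg_left e1 hC₂.le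
      have hMcast : (M : ℝ) = 1 + 110 * (k : ℝ) * (D : ℝ) := by
        rw [hM]; push_cast; ring
      have hpos : (0:ℝ) ≤ C₁ * C₂ * 2 ^ (4 * k) := by positivity
      rw [hMcast, hQdef] at *
      nlinarith [e4, e1', e2, e3, hpos]
    calc (((G.filter (fun i => depth i ≤ M)).filter (fun i => x ∈ J i)).card : ℝ)
        ≤ (M : ℝ) := by exact_mod_cast hcardM
      _ ≤ (C₁ * C₂ + 220 * C₂ + 111) * 2 ^ (4 * k) := hMle
  · -- L¹ bound
    have hsubF : G.filter (fun i => ¬ depth i ≤ M) ⊆ F (1 + (110 * k) * D) := by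
      intro i hi
      rw [mem_filter] at hi ⊢
      exact ⟨hi.1, by omega⟩
    have h1 : (∑ i ∈ G.filter (fun i => ¬ depth i ≤ M), (volume (J i)).toReal)
        ≤ ∑ i ∈ F (1 + (110 * k) * D), (volume (J i)).toReal :=
      Finset.sum_le_sum_of_subset_of_nonneg hsubF (fun _ _ _ => ENNReal.toReal_nonneg)
    have h2 := key2 (1 + (110 * k) * D)
    have h3 := hiter (110 * k)
    have h4 : (volume (U (1 + (110 * k) * D))).toReal
        ≤ (1/2 : ℝ)^(110 * k) * (C₁ * 2 ^ (3 * k)) := by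
      refine h3.trans ?_
      exact mul_le_mul_of_nonneg_left hU1 (by positivity)
    have h5 : (∑ i ∈ G.filter (fun i => ¬ depth i ≤ M), (volume (J i)).toReal)
        ≤ Q * ((1/2 : ℝ)^(110 * k) * (C₁ * 2 ^ (3 * k))) := by
      refine (h1.trans h2).trans ?_
      exact mul_le_mul_of_nonneg_left h4 hQ.le
    have hpw : (1/2 : ℝ)^(110 * k) * 2 ^ (3 * k) * 2 ^ (3 * k) ≤ ((2:ℝ) ^ (100 * k))⁻¹ := by
      rw [one_div, inv_pow]
      rw [mul_assoc, inv_mul_le_iff₀ (pow_pos two_pos _), ← div_eq_mul_inv,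
        le_div_iff₀ (pow_pos two_pos _)]
      calc (2:ℝ) ^ (3 * k) * 2 ^ (3 * k) * 2 ^ (100 * k)
          = 2 ^ (3 * k + 3 * k + 100 * k) := by rw [← pow_add, ← pow_add]
        _ ≤ 2 ^ (110 * k) := pow_le_pow_right₀ one_le_two (by omega)
    have heq : Q * ((1/2 : ℝ)^(110 * k) * (C₁ * 2 ^ (3 * k)))
        = (C₁ * C₂) * ((1/2 : ℝ)^(110 * k) * 2 ^ (3 * k) * 2 ^ (3 * k)) := by
      rw [hQdef]; ring
    refine h5.trans ?_
    rw [heq]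
    calc (C₁ * C₂) * ((1/2 : ℝ)^(110 * k) * 2 ^ (3 * k) * 2 ^ (3 * k))
        ≤ (C₁ * C₂) * ((2:ℝ) ^ (100 * k))⁻¹ :=
          mul_le_mul_of_nonneg_left hpw (by positivity)
      _ ≤ (C₁ * C₂ + 220 * C₂ + 111) * ((2:ℝ) ^ (100 * k))⁻¹ := by
          have : (0:ℝ) < ((2:ℝ) ^ (100 * k))⁻¹ := by positivity
          nlinarith
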